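/- Let w : [0,∞) → [0,∞) be a non-decreasing unbounded function such that there exist C > 0 and A > 1 with 2w(t) ≤ w(Ct) + log A for all t ≥ 0. Then there exists C' > 1 such that ∫₀^∞ e^{w(t) - w(C't)} dt < ∞. -/

import Mathlib

open Real MeasureTheory Set

set_option maxHeartbeats 2000000 in
theorem stmt_3 (w : ℝ → ℝ)
    (hmono : MonotoneOn w (Set.Ici 0))
    (hpos : ∀ t ≥ (0:ℝ), 0 ≤ w t)
    (hunb : ∀ C : ℝ, ∃ t ≥ (0:ℝ), C ≤ w t)
    (C A : ℝ) (hC : 0 < C) (hA : 1 < A)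
    (h : ∀ t ≥ (0:ℝ), 2 * w t ≤ w (C * t) + Real.log A) :
    ∃ C' > (1:ℝ), MeasureTheory.IntegrableOn
      (fun t => Real.exp (w t - w (C' * t))) (Set.Ioi (0:ℝ)) := by
  have hlogA : 0 ≤ Real.log A := Real.log_nonneg hA.le
  have hA0 : (0:ℝ) < A := lt_trans one_pos hA
  -- C must exceed 1
  have hC1 : 1 < C := by
    by_contra hle
    push_neg at hle
    obtain ⟨t, ht0, htw⟩ := hunb (Real.log A + 1)
    have h1 : C * t ≤ t := by nlinarith
    have h2 : (0:ℝ) ≤ C * t := by positivity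
    have h3 := h t ht0
    have h4 := hmono (Set.mem_Ici.2 h2) (Set.mem_Ici.2 ht0) h1
    linarith
  obtain ⟨t₀, ht₀, hw₀⟩ := hunb (Real.log A + 1)
  set t₁ : ℝ := max t₀ 1 with ht₁def
  have ht₁1 : (1:ℝ) ≤ t₁ := le_max_right _ _
  have ht₁0 : (0:ℝ) < t₁ := lt_of_lt_of_le one_pos ht₁1
  have hwt₁ : Real.log A + 1 ≤ w t₁ :=
    hw₀.trans (hmono (Set.mem_Ici.2 ht₀) (Set.mem_Ici.2 ht₁0.le) (le_max_left _ _))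
  -- iterated growth
  have key : ∀ n : ℕ, Real.log A + 2 ^ n ≤ w (C ^ n * t₁) := by
    intro n
    induction n with
    | zero => simpa using hwt₁
    | succ n ih =>
      have hCn : (0:ℝ) ≤ C ^ n * t₁ := by positivity
      have h1 := h (C ^ n * t₁) hCn
      have heq : C * (C ^ n * t₁) = C ^ (n+1) * t₁ := by ring
      rw [heq] at h1
      have h2 : (2:ℝ)^(n+1) = 2 * 2^n := by ring
      linarith
  set α : ℝ := Real.log 2 / Real.log C with hαdef
  have hlogC : 0 < Real.log C := Real.log_pos hC1
  have hα : 0 < α := div_pos (Real.log_pos one_lt_two) hlogC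
  -- polynomial lower bound
  have growth : ∀ t, t₁ ≤ t → (1/2) * (t / t₁) ^ α ≤ w t := by
    intro t ht
    have ht0 : 0 < t := lt_of_lt_of_le ht₁0 ht
    have hq1 : 1 ≤ t / t₁ := (one_le_div ht₁0).2 ht
    have hq0 : 0 < t / t₁ := lt_of_lt_of_le one_pos hq1
    set n : ℕ := ⌊Real.logb C (t / t₁)⌋₊ with hn
    have hlb0 : 0 ≤ Real.logb C (t / t₁) := Real.logb_nonneg hC1 hq1
    have h1 : (C:ℝ) ^ n ≤ t / t₁ := by
      have h1' : (C:ℝ) ^ (n:ℝ) ≤ C ^ Real.logb C (t / t₁) :=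
        Real.rpow_le_rpow_of_exponent_le hC1.le (Nat.floor_le hlb0)
      rwa [Real.rpow_logb hC ((ne_of_lt hC1).symm) hq0, Real.rpow_natCast] at h1'
    have h2 : C ^ n * t₁ ≤ t := (le_div_iff₀ ht₁0).1 h1
    have hw1 : (2:ℝ) ^ n ≤ w t := by
      have hk := key n
      have hm := hmono (Set.mem_Ici.2 (by positivity : (0:ℝ) ≤ C ^ n * t₁))
        (Set.mem_Ici.2 ht0.le) h2
      linarith
    have h3 : (t / t₁) ^ α ≤ 2 * 2 ^ n := by
      have hub : Real.logb C (t / t₁) < n + 1 := Nat.lt_floor_add_one _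
      have e1 : (t / t₁) ^ α = Real.exp (Real.log 2 * Real.logb C (t / t₁)) := by
        rw [Real.rpow_def_of_pos hq0, Real.logb, hαdef]
        congr 1; ring
      have e2 : (2:ℝ) * 2 ^ n = Real.exp (Real.log 2 * ((n:ℝ) + 1)) := by
        rw [show (2:ℝ) * 2 ^ n = 2 ^ (n+1) by ring, ← Real.rpow_natCast 2 (n+1),
          Real.rpow_def_of_pos two_pos]
        congr 1; push_cast; ring
      rw [e1, e2]
      exact Real.exp_le_exp.2 (by nlinarith [Real.log_pos one_lt_two])
    nlinarith
  refine ⟨C^2, by nlinarith, ?_⟩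
  have hC2 : (1:ℝ) ≤ C^2 := by nlinarith
  -- pointwise bound by integrable majorant
  have bound : ∀ t ∈ Set.Ioi (0:ℝ),
      Real.exp (w t - w (C^2 * t)) ≤ (A+1) * Real.exp (-(1/2) * (t/t₁)^α) := by
    intro t ht
    have ht0 : (0:ℝ) < t := ht
    have hCt20 : (0:ℝ) ≤ C^2 * t := by positivity
    rcases le_total t t₁ with hle | hle
    · have hmt : t ≤ C^2 * t := le_mul_of_one_le_left ht0.le hC2
      have h1 : Real.exp (w t - w (C^2 * t)) ≤ 1 := by
        have hm := hmono (Set.mem_Ici.2 ht0.le) (Set.mem_Ici.2 hCt20) hmt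
        exact Real.exp_le_one_iff.2 (by linarith)
      have hx0 : (0:ℝ) ≤ (t/t₁)^α := Real.rpow_nonneg (by positivity) α
      have hx1 : (t/t₁)^α ≤ 1 :=
        Real.rpow_le_one (by positivity) ((div_le_one ht₁0).2 hle) hα.le
      have h2 : Real.exp (-(1/2):ℝ) ≤ Real.exp (-(1/2) * (t/t₁)^α) :=
        Real.exp_le_exp.2 (by nlinarith)
      have hhalf : Real.exp ((1:ℝ)/2) < 2 := by
        have hl : ((1:ℝ)/2) < Real.log 2 := by
          have := Real.log_two_gt_d9; linarith
        calc Real.exp ((1:ℝ)/2) < Real.exp (Real.log 2) := Real.exp_lt_exp.2 hl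
          _ = 2 := Real.exp_log two_pos
      have h3 : (1:ℝ) ≤ 2 * Real.exp (-(1/2):ℝ) := by
        rw [Real.exp_neg]
        have he : (0:ℝ) < Real.exp ((1:ℝ)/2) := Real.exp_pos _
        have hinv : (0:ℝ) < (Real.exp ((1:ℝ)/2))⁻¹ := by positivity
        have hcanc : Real.exp ((1:ℝ)/2) * (Real.exp ((1:ℝ)/2))⁻¹ = 1 :=
          mul_inv_cancel₀ (ne_of_gt he)
        nlinarith
      have h4 : (2:ℝ) ≤ A + 1 := by linarith
      nlinarith [Real.exp_pos (-(1/2) * (t/t₁)^α)]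
    · have hCt : (0:ℝ) ≤ C * t := by positivity
      have h1 := h t ht0.le
      have h2 := h (C * t) hCt
      have heq : C * (C * t) = C^2 * t := by ring
      rw [heq] at h2
      have hmono1 : w t ≤ w (C * t) :=
        hmono (Set.mem_Ici.2 ht0.le) (Set.mem_Ici.2 hCt) (le_mul_of_one_le_left ht0.le hC1.le)
      have h4 : w t - w (C^2 * t) ≤ Real.log A - w t := by linarith
      have h5 := growth t hle
      calc Real.exp (w t - w (C^2*t)) ≤ Real.exp (Real.log A - w t) := Real.exp_le_exp.2 h4
        _ = A * Real.exp (-w t) := by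
            rw [Real.exp_sub, Real.exp_log hA0, div_eq_mul_inv, ← Real.exp_neg]
        _ ≤ A * Real.exp (-(1/2)*(t/t₁)^α) :=
            mul_le_mul_of_nonneg_left (Real.exp_le_exp.2 (by linarith)) hA0.le
        _ ≤ (A+1) * Real.exp (-(1/2)*(t/t₁)^α) :=
            mul_le_mul_of_nonneg_right (by linarith) (Real.exp_pos _).le
  -- the majorant is integrable
  have hmeasg : Measurable (fun u : ℝ => Real.exp (-(1/2) * u ^ α)) := by
    exact (((Real.continuous_rpow_const hα.le).measurable).const_mul _).exp
  have hglo : IntegrableOn (fun u : ℝ => Real.exp (-(1/2) * u ^ α)) (Set.Ioi (0:ℝ)) := by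
    have hlo := isLittleO_log_rpow_atTop hα
    have hev : ∀ᶠ u in Filter.atTop, ‖Real.log u‖ ≤ (1/4) * ‖u ^ α‖ :=
      hlo.def (by norm_num)
    obtain ⟨T, hT⟩ := Filter.eventually_atTop.1 hev
    set T' : ℝ := max T 1 with hT'def
    have hT'1 : (1:ℝ) ≤ T' := le_max_right _ _
    have hT'0 : (0:ℝ) < T' := lt_of_lt_of_le one_pos hT'1
    rw [← Set.Ioc_union_Ioi_eq_Ioi hT'0.le, integrableOn_union]
    constructor
    · apply Integrable.mono' (g := fun _ : ℝ => (1:ℝ))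
        (integrableOn_const measure_Ioc_lt_top.ne enorm_ne_top) hmeasg.aestronglyMeasurable
      filter_upwards [ae_restrict_mem measurableSet_Ioc] with u hu
      rw [Real.norm_eq_abs, abs_of_pos (Real.exp_pos _)]
      have hu0 : (0:ℝ) < u := hu.1
      have : (0:ℝ) ≤ u ^ α := Real.rpow_nonneg hu0.le α
      exact Real.exp_le_one_iff.2 (by nlinarith)
    · apply Integrable.mono'
        (integrableOn_Ioi_rpow_of_lt (by norm_num : (-2:ℝ) < -1) hT'0)
        hmeasg.aestronglyMeasurable
      filter_upwards [ae_restrict_mem measurableSet_Ioi] with u hu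
      have hu1 : (1:ℝ) ≤ u := le_trans hT'1 (le_of_lt hu)
      have hu0 : (0:ℝ) < u := lt_of_lt_of_le one_pos hu1
      have hb := hT u (le_trans (le_max_left T 1) (le_of_lt hu))
      rw [Real.norm_eq_abs, abs_of_nonneg (Real.log_nonneg hu1), Real.norm_eq_abs,
        abs_of_nonneg (Real.rpow_nonneg hu0.le α)] at hb
      rw [Real.norm_eq_abs, abs_of_pos (Real.exp_pos _),
        show u ^ (-2:ℝ) = Real.exp ((-2) * Real.log u) from by
          rw [Real.rpow_def_of_pos hu0]; congr 1; ring]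
      exact Real.exp_le_exp.2 (by nlinarith)
  have hG : IntegrableOn (fun t : ℝ => Real.exp (-(1/2) * (t / t₁) ^ α)) (Set.Ioi (0:ℝ)) := by
    have h0 : (0:ℝ) < t₁⁻¹ := by positivity
    have h1 := (integrableOn_Ioi_comp_mul_left_iff
      (fun u : ℝ => Real.exp (-(1/2) * u ^ α)) 0 h0).2 (by simpa using hglo)
    simp only [div_eq_inv_mul]
    simpa using h1
  -- measurability of the integrand
  have hW : Monotone (fun t : ℝ => w (max t 0)) := fun a b hab =>
    hmono (Set.mem_Ici.2 (le_max_right _ _)) (Set.mem_Ici.2 (le_max_right _ _))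
      (max_le_max hab le_rfl)
  have hWm : Measurable (fun t : ℝ => w (max t 0)) := hW.measurable
  have hfm : AEStronglyMeasurable (fun t => Real.exp (w t - w (C^2 * t)))
      (volume.restrict (Set.Ioi (0:ℝ))) := by
    have hm : Measurable (fun t : ℝ => Real.exp (w (max t 0) - w (max (C^2 * t) 0))) :=
      (hWm.sub (hWm.comp (measurable_const_mul (C^2)))).exp
    refine hm.aestronglyMeasurable.congr ?_
    filter_upwards [ae_restrict_mem measurableSet_Ioi] with t ht
    have ht0 : (0:ℝ) < t := ht
    rw [max_eq_left ht0.le, max_eq_left (by positivity : (0:ℝ) ≤ C^2 * t)]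
  apply Integrable.mono' (hG.const_mul (A+1)) hfm
  filter_upwards [ae_restrict_mem measurableSet_Ioi] with t ht
  rw [Real.norm_eq_abs, abs_of_pos (Real.exp_pos _)]
  exact bound t ht
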